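/- Let R be an integral domain and R' a faithfully flat R-algebra which is a finite direct product of Krull domains. Then for every height-one prime ideal p of R, there exists a height-one prime ideal P of R' such that P ∩ R = p. -/

import Mathlib

universe u

def IsHeightOnePrime {R : Type u} [CommRing R] (P : Ideal R) : Prop :=
  P.IsPrime ∧ (∃ Q : Ideal R, Q.IsPrime ∧ Q < P) ∧
    ∀ Q₁ Q₂ : Ideal R, Q₁.IsPrime → Q₂.IsPrime → Q₁ < Q₂ → ¬ Q₂ < P

def IsKrullDomain (R : Type u) [CommRing R] [IsDomain R] : Prop :=
  (∀ (P : Ideal R) [P.IsPrime], IsHeightOnePrime P →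
    IsDiscreteValuationRing (Localization.AtPrime P)) ∧
  (∀ x : FractionRing R,
    (∀ P : Ideal R, IsHeightOnePrime P →
      ∃ a s : R, s ∉ P ∧ x * algebraMap R (FractionRing R) s = algebraMap R (FractionRing R) a) →
    ∃ r : R, algebraMap R (FractionRing R) r = x) ∧
  (∀ r : R, r ≠ 0 → {P : Ideal R | IsHeightOnePrime P ∧ r ∈ P}.Finite)

def IsFiniteProductOfKrullDomains (B : Type u) [CommRing B] : Prop :=
  ∃ (n : ℕ) (D : Fin n → Type u) (instR : ∀ i, CommRing (D i)) (instD : ∀ i, IsDomain (D i)),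
    (∀ i, @IsKrullDomain (D i) (instR i) (instD i)) ∧ Nonempty (B ≃+* ∀ i, D i)

open TensorProduct in
lemma aux_flat_smul_inj {R A : Type u} [CommRing R] [IsDomain R] [CommRing A] [Algebra R A]
    [Module.Flat R A] {a : R} (ha : a ≠ 0) {x : A} (hx : a • x = 0) : x = 0 := by
  have hinj : Function.Injective (LinearMap.lsmul R R a) := by
    intro u v huv
    simpa using mul_left_cancel₀ ha (by simpa using huv)
  have h2 := Module.Flat.lTensor_preserves_injective_linearMap (M := A) _ hinj
  have h3 : (LinearMap.lTensor A (LinearMap.lsmul R R a)) (x ⊗ₜ[R] (1:R)) = 0 := by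
    simp only [LinearMap.lTensor_tmul, LinearMap.lsmul_apply, mul_one]
    apply (TensorProduct.rid R A).injective
    simpa [TensorProduct.rid_tmul] using hx
  have h4 : x ⊗ₜ[R] (1:R) = 0 := h2 (by simpa using h3)
  have := congrArg (TensorProduct.rid R A) h4
  simpa using this
open TensorProduct in
lemma aux_ff_not_mem_map {R A : Type u} [CommRing R] [CommRing A] [Algebra R A]
    [Module.FaithfullyFlat R A] {p : Ideal R} {s : R} (hs : s ∉ p) :
    algebraMap R A s ∉ p.map (algebraMap R A) := by
  intro hmem
  -- the element (mk s) ⊗ 1 is zero in (R⧸p) ⊗ A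
  have h0 : (Ideal.Quotient.mk p s) ⊗ₜ[R] (1 : A) = (0 : (R ⧸ p) ⊗[R] A) := by
    apply (TensorProduct.quotTensorEquivQuotSMul A p).injective
    rw [TensorProduct.quotTensorEquivQuotSMul_mk_tmul, map_zero,
      Submodule.Quotient.mk_eq_zero, Ideal.smul_top_eq_map]
    simpa [Algebra.smul_def] using hmem
  -- the map r ↦ r • mk s is nonzero but its rTensor is zero
  set f : R →ₗ[R] R ⧸ p := LinearMap.toSpanSingleton R (R ⧸ p) (Ideal.Quotient.mk p s) with hf
  have hfne : f ≠ 0 := by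
    intro h
    have : f 1 = 0 := by rw [h]; rfl
    simp only [hf, LinearMap.toSpanSingleton_apply, one_smul,
      Ideal.Quotient.eq_zero_iff_mem] at this
    exact hs this
  apply hfne
  rw [Module.FaithfullyFlat.zero_iff_rTensor_zero R A f]
  apply TensorProduct.ext'
  intro r x
  have hx : (Ideal.Quotient.mk p s) ⊗ₜ[R] x = (0 : (R ⧸ p) ⊗[R] A) := by
    have := congrArg (LinearMap.lTensor (R ⧸ p) (LinearMap.mulLeft R x)) h0
    simpa using this
  calc (LinearMap.rTensor A f) (r ⊗ₜ[R] x) = (r • Ideal.Quotient.mk p s) ⊗ₜ[R] x := by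
        simp [hf]
    _ = r • ((Ideal.Quotient.mk p s) ⊗ₜ[R] x) := by rw [TensorProduct.smul_tmul']
    _ = 0 := by rw [hx, smul_zero]
    _ = (0 : _ →ₗ[R] _) (r ⊗ₜ[R] x) := rfl

lemma aux_exists_prime_over {R A : Type u} [CommRing R] [CommRing A] [Algebra R A]
    [Module.FaithfullyFlat R A] (p : Ideal R) [hp : p.IsPrime] :
    ∃ Q : Ideal A, Q.IsPrime ∧ Q.comap (algebraMap R A) = p := by
  obtain ⟨Q, hQ, hle, hdisj⟩ := Ideal.exists_le_prime_disjoint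
    (p.map (algebraMap R A)) (p.primeCompl.map (algebraMap R A))
    (by
      rw [Set.disjoint_left]
      rintro x hx ⟨s, hs, rfl⟩
      exact aux_ff_not_mem_map hs hx)
  refine ⟨Q, hQ, le_antisymm ?_ ?_⟩
  · intro x hx
    by_contra hxp
    exact Set.disjoint_left.mp hdisj hx ⟨x, hxp, rfl⟩
  · exact Ideal.le_comap_map.trans (Ideal.comap_mono hle)
variable {n : ℕ} {D : Fin n → Type u} [∀ i, CommRing (D i)]

lemma aux_single_mul_single {i j : Fin n} (hij : i ≠ j) :
    (Pi.single i (1 : D i)) * (Pi.single j 1) = 0 := by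
  funext k
  simp only [Pi.mul_apply, Pi.zero_apply]
  rcases eq_or_ne k i with rfl | hk
  · rw [Pi.single_eq_of_ne hij]; ring
  · rw [Pi.single_eq_of_ne hk]; ring

lemma aux_exists_idx (Q : Ideal (∀ i, D i)) (hQ : Q.IsPrime) :
    ∃ i, Pi.single i (1 : D i) ∉ Q := by
  by_contra h
  push_neg at h
  apply hQ.ne_top
  rw [Ideal.eq_top_iff_one]
  have : (1 : ∀ i, D i) = ∑ i, Pi.single i ((1 : ∀ i, D i) i) := (Finset.univ_sum_single _).symm
  rw [this]
  exact Ideal.sum_mem _ fun i _ => h i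

/-- if `Pi.single i 1 ∉ K` for a prime `K`, then `ker (eval i) ≤ K`. -/
lemma aux_ker_le {K : Ideal (∀ i, D i)} (hK : K.IsPrime) {i : Fin n}
    (hi : Pi.single i (1 : D i) ∉ K) {x : ∀ i, D i} (hx : x i = 0) : x ∈ K := by
  have h0 : x * Pi.single i 1 = 0 := by
    funext k
    simp only [Pi.mul_apply, Pi.zero_apply]
    rcases eq_or_ne k i with rfl | hk
    · rw [hx]; ring
    · rw [Pi.single_eq_of_ne hk]; ring
  rcases hK.mem_or_mem (show x * Pi.single i 1 ∈ K by rw [h0]; exact K.zero_mem) with h | h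
  · exact h
  · exact absurd h hi

lemma aux_prime_structure {K : Ideal (∀ i, D i)} (hK : K.IsPrime) {i : Fin n}
    (hi : Pi.single i (1 : D i) ∉ K) :
    (K.map (Pi.evalRingHom D i)).IsPrime ∧ K = (K.map (Pi.evalRingHom D i)).comap (Pi.evalRingHom D i) := by
  have hsurj : Function.Surjective (Pi.evalRingHom D i) := fun d => ⟨Pi.single i d, Pi.single_eq_same i d⟩
  have hker : RingHom.ker (Pi.evalRingHom D i) ≤ K := by
    intro x hx
    exact aux_ker_le hK hi hx
  constructor
  · exact Ideal.map_isPrime_of_surjective hsurj hker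
  · rw [Ideal.comap_map_of_surjective _ hsurj]
    exact (sup_eq_left.mpr hker).symm
lemma aux_dvr_step {D : Type u} [CommRing D] [IsDomain D] {P : Ideal D} [hP : P.IsPrime]
    (hdvr : IsDiscreteValuationRing (Localization.AtPrime P))
    {a s : D} (ha : a ≠ 0) (hs : s ∈ P) :
    ∃ (m : ℕ) (t a' : D), t ∉ P ∧ s ^ m * t = a * a' := by
  set L := Localization.AtPrime P with hL
  set f := algebraMap D L with hf
  have hle : P.primeCompl ≤ nonZeroDivisors D :=
    le_nonZeroDivisors_of_noZeroDivisors (fun h => h P.zero_mem)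
  have hinj : Function.Injective f := IsLocalization.injective L hle
  have hfa : f a ≠ 0 := fun h => ha (hinj (by rw [h, map_zero]))
  obtain ⟨ϖ, hϖ⟩ := IsDiscreteValuationRing.exists_irreducible L
  obtain ⟨m, hm⟩ := IsDiscreteValuationRing.associated_pow_irreducible hfa hϖ
  have hfs : f s ∈ IsLocalRing.maximalIdeal L :=
    (IsLocalization.AtPrime.to_map_mem_maximal_iff L P s).mpr hs
  have hdvd : ϖ ∣ f s := by
    rwa [hϖ.maximalIdeal_eq, Ideal.mem_span_singleton] at hfs
  have hdvd2 : f a ∣ (f s) ^ m := hm.dvd.trans (pow_dvd_pow_of_dvd hdvd m)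
  obtain ⟨z, hz⟩ := hdvd2
  obtain ⟨⟨a', t⟩, hmk : IsLocalization.mk' L a' t = z⟩ := IsLocalization.mk'_surjective P.primeCompl z
  refine ⟨m, t, a', t.2, hinj ?_⟩
  have hspec : IsLocalization.mk' L a' t * f t = f a' := IsLocalization.mk'_spec L a' t
  rw [map_mul, map_mul, map_pow, hz, mul_assoc, ← hmk, hspec]

lemma aux_krull {D : Type u} [CommRing D] [IsDomain D] (hK : IsKrullDomain D)
    {Q : Ideal D} (hQ : Q.IsPrime) {a : D} (ha : a ≠ 0) (haQ : a ∈ Q) :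
    ∃ P : Ideal D, IsHeightOnePrime P ∧ a ∈ P ∧ P ≤ Q := by
  obtain ⟨h1, h2, h3⟩ := hK
  by_contra hcon
  push_neg at hcon
  have hfin := h3 a ha
  set T := hfin.toFinset with hT
  have hch : ∀ P ∈ T, ∃ x, x ∈ P ∧ x ∉ Q := by
    intro P hPT
    rw [hT, Set.Finite.mem_toFinset] at hPT
    exact SetLike.not_le_iff_exists.mp (hcon P hPT.1 hPT.2)
  choose c hc1 hc2 using hch
  set s : D := ∏ x ∈ T.attach, c x.1 x.2 with hsdef
  have hsQ : s ∉ Q :=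
    Finset.prod_induction _ (· ∉ Q)
      (fun u v hu hv huv => (hQ.mem_or_mem huv).elim hu hv)
      (fun h => hQ.ne_top ((Ideal.eq_top_iff_one _).mpr h))
      (fun x _ => hc2 x.1 x.2)
  have hsP : ∀ P (hPT : P ∈ T), s ∈ P := by
    intro P hPT
    have hdvd : c P hPT ∣ s := by
      rw [hsdef]
      exact Finset.dvd_prod_of_mem (fun x : {y // y ∈ T} => c x.1 x.2)
        (Finset.mem_attach T ⟨P, hPT⟩)
    obtain ⟨d, hd⟩ := hdvd
    rw [hd]
    exact Ideal.mul_mem_right _ _ (hc1 P hPT)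
  have hstep : ∀ P (hPT : P ∈ T), ∃ (m : ℕ), ∀ k, m ≤ k →
      ∃ t a', t ∉ P ∧ s ^ k * t = a * a' := by
    intro P hPT
    have hsPmem := hsP P hPT
    rw [hT, Set.Finite.mem_toFinset] at hPT
    obtain ⟨hP1, hPa⟩ := hPT
    haveI := hP1.1
    have hdvr := h1 P hP1
    obtain ⟨m, t, a', ht, heq⟩ := aux_dvr_step hdvr ha hsPmem
    refine ⟨m, fun k hk => ⟨t, a' * s ^ (k - m), ht, ?_⟩⟩
    calc s ^ k * t = s ^ (k - m) * (s ^ m * t) := by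
          rw [← mul_assoc, ← pow_add]; congr 2; omega
      _ = s ^ (k - m) * (a * a') := by rw [heq]
      _ = a * (a' * s ^ (k - m)) := by ring
  choose m_ hm_ using hstep
  set N := 1 + T.attach.sup (fun x => m_ x.1 x.2) with hN
  have hNpos : 0 < N := lt_of_lt_of_le Nat.one_pos (Nat.le_add_right 1 _)
  have hNall : ∀ P (hPT : P ∈ T), ∃ t a', t ∉ P ∧ s ^ N * t = a * a' := by
    intro P hPT
    refine hm_ P hPT N ?_
    calc m_ P hPT ≤ T.attach.sup (fun x => m_ x.1 x.2) :=
          Finset.le_sup (f := fun x : {y // y ∈ T} => m_ x.1 x.2) (Finset.mem_attach T ⟨P, hPT⟩)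
      _ ≤ N := Nat.le_add_left _ 1
  set K := FractionRing D
  set ι := algebraMap D K with hι
  have hinj : Function.Injective ι := IsFractionRing.injective D K
  have hιa : ι a ≠ 0 := fun h => ha (hinj (by rw [h, map_zero]))
  set x : K := ι (s ^ N) * (ι a)⁻¹ with hx
  have hcond : ∀ P : Ideal D, IsHeightOnePrime P →
      ∃ b t : D, t ∉ P ∧ x * ι t = ι b := by
    intro P hP1
    by_cases haP : a ∈ P
    · have hPT : P ∈ T := by rw [hT, Set.Finite.mem_toFinset]; exact ⟨hP1, haP⟩
      obtain ⟨t, b, ht, heq⟩ := hNall P hPT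
      refine ⟨b, t, ht, ?_⟩
      have h2' : ι (s ^ N) * ι t = ι a * ι b := by
        rw [← map_mul, ← map_mul, heq]
      rw [hx, mul_comm (ι (s ^ N)) (ι a)⁻¹, mul_assoc, h2', ← mul_assoc,
        inv_mul_cancel₀ hιa, one_mul]
    · refine ⟨s ^ N, a, haP, ?_⟩
      rw [hx, mul_assoc, inv_mul_cancel₀ hιa, mul_one]
  obtain ⟨r, hr⟩ := h2 x hcond
  have hra : r * a = s ^ N := by
    apply hinj
    rw [map_mul, hr, hx, mul_assoc, inv_mul_cancel₀ hιa, mul_one]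
  have hsNQ : s ^ N ∈ Q := hra ▸ Ideal.mul_mem_left _ r haQ
  exact hsQ ((hQ.pow_mem_iff_mem N hNpos).mp hsNQ)
theorem stmt11 (R : Type u) (R' : Type u) [CommRing R] [IsDomain R] [CommRing R']
    [Algebra R R'] [Module.FaithfullyFlat R R']
    (hR' : IsFiniteProductOfKrullDomains R')
    (p : Ideal R) (hp : IsHeightOnePrime p) :
    ∃ P : Ideal R', IsHeightOnePrime P ∧ Ideal.comap (algebraMap R R') P = p := by
  obtain ⟨n, D, instR, instD, hKrull, ⟨e⟩⟩ := hR'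
  haveI := hp.1
  -- a prime of R' lying over p
  obtain ⟨Q', hQ', hQ'c⟩ := aux_exists_prime_over (R := R) (A := R') p
  -- transport to the product ring and find the relevant factor
  set K : Ideal (∀ i, D i) := Q'.comap e.symm.toRingHom with hK
  haveI hKp : K.IsPrime := hQ'.comap _
  obtain ⟨i, hi⟩ := aux_exists_idx K hKp
  obtain ⟨hqprime, hKeq⟩ := aux_prime_structure hKp hi
  set q : Ideal (D i) := K.map (Pi.evalRingHom D i) with hq
  set φ : R →+* D i := (Pi.evalRingHom D i).comp (e.toRingHom.comp (algebraMap R R')) with hφ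
  have hKQ' : K.comap e.toRingHom = Q' := by
    rw [hK, Ideal.comap_comap, RingEquiv.symm_toRingHom_comp_toRingHom, Ideal.comap_id]
  have hφq : q.comap φ = p := by
    rw [hφ, ← Ideal.comap_comap, ← Ideal.comap_comap, ← hKeq, hKQ', hQ'c]
  -- a nonzero element of p, whose image in D i is nonzero
  have hpne : p ≠ ⊥ := by
    obtain ⟨Q₀, hQ₀, hlt⟩ := hp.2.1
    intro h
    rw [h] at hlt
    exact not_lt_bot hlt
  obtain ⟨a, hap, hane⟩ := Submodule.exists_mem_ne_zero_of_ne_bot hpne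
  have hφa : φ a ≠ 0 := by
    intro h0
    have h1 : e (algebraMap R R' a) * Pi.single i 1 = 0 := by
      funext k
      rcases eq_or_ne k i with rfl | hk
      · have : (e (algebraMap R R' a)) k = 0 := h0
        simp [Pi.single_eq_same, this]
      · simp [Pi.single_eq_of_ne hk]
    have h2 : algebraMap R R' a * e.symm (Pi.single i 1) = 0 := by
      apply e.injective
      rw [map_mul, map_zero, RingEquiv.apply_symm_apply]
      exact h1
    have h3 : a • e.symm (Pi.single i (1 : D i)) = 0 := by
      rw [Algebra.smul_def]; exact h2
    have h4 := aux_flat_smul_inj hane h3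
    have h5 : (Pi.single i (1 : D i)) = 0 := e.symm.injective (by rw [h4, map_zero])
    have h6 := congrFun h5 i
    rw [Pi.single_eq_same] at h6
    exact one_ne_zero h6
  have haq : φ a ∈ q := by
    have : a ∈ q.comap φ := by rw [hφq]; exact hap
    exact this
  -- the height one prime in the factor
  obtain ⟨P₁, hP₁, haP₁, hP₁q⟩ := aux_krull (hKrull i) hqprime hφa haq
  haveI hP₁p : P₁.IsPrime := hP₁.1
  set Pbig : Ideal R' := (P₁.comap (Pi.evalRingHom D i)).comap e.toRingHom with hPbig
  have hPbig_mem : ∀ x : R', x ∈ Pbig ↔ (e x) i ∈ P₁ := fun x => Iff.rfl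
  -- contraction of Pbig is the contraction of P₁ under φ
  have hPc : Pbig.comap (algebraMap R R') = P₁.comap φ := by
    rw [hPbig, hφ, Ideal.comap_comap, Ideal.comap_comap]
  have hsurj : Function.Surjective (Pi.evalRingHom D i) :=
    fun d => ⟨Pi.single i d, Pi.single_eq_same i d⟩
  haveI hPφ : (P₁.comap φ).IsPrime := hP₁p.comap _
  have hle : P₁.comap φ ≤ p := by rw [← hφq]; exact Ideal.comap_mono hP₁q
  have hnebot : P₁.comap φ ≠ ⊥ := by
    intro h
    have : a ∈ P₁.comap φ := haP₁
    rw [h] at this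
    exact hane (by simpa using this)
  have hPcp : P₁.comap φ = p := by
    by_contra hnep
    exact hp.2.2 ⊥ (P₁.comap φ) Ideal.bot_prime hPφ
      (bot_lt_iff_ne_bot.mpr hnebot) (lt_of_le_of_ne hle hnep)
  refine ⟨Pbig, ⟨?_, ?_, ?_⟩, by rw [hPc, hPcp]⟩
  · exact (hP₁p.comap _).comap _
  · -- the zero ideal of the factor D i gives a strictly smaller prime
    refine ⟨((⊥ : Ideal (D i)).comap (Pi.evalRingHom D i)).comap e.toRingHom,
      (Ideal.bot_prime.comap _).comap _, ?_⟩
    refine lt_of_le_of_ne (Ideal.comap_mono (Ideal.comap_mono bot_le)) ?_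
    intro hcontra
    have hmem : e.symm (Pi.single i (φ a)) ∈ Pbig := by
      rw [hPbig_mem, RingEquiv.apply_symm_apply, Pi.single_eq_same]
      exact haP₁
    rw [← hcontra] at hmem
    have : (e (e.symm (Pi.single i (φ a)))) i ∈ (⊥ : Ideal (D i)) := hmem
    rw [RingEquiv.apply_symm_apply, Pi.single_eq_same] at this
    exact hφa this
  · -- no chain of two strict inclusions below Pbig
    intro Q₁ Q₂ hQ₁ hQ₂ h12 h2P
    -- transport to the product ring
    have hstrict : ∀ {I J : Ideal R'}, I < J →
        I.comap e.symm.toRingHom < J.comap e.symm.toRingHom := by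
      intro I J hIJ
      refine lt_of_le_of_ne (Ideal.comap_mono hIJ.le) (fun h => hIJ.ne ?_)
      exact Ideal.comap_injective_of_surjective _ e.symm.surjective h
    have hPbig_symm : Pbig.comap e.symm.toRingHom = P₁.comap (Pi.evalRingHom D i) := by
      rw [hPbig, Ideal.comap_comap, RingEquiv.toRingHom_comp_symm_toRingHom, Ideal.comap_id]
    set K₁ : Ideal (∀ j, D j) := Q₁.comap e.symm.toRingHom with hK₁
    set K₂ : Ideal (∀ j, D j) := Q₂.comap e.symm.toRingHom with hK₂
    haveI hK₁p : K₁.IsPrime := hQ₁.comap _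
    haveI hK₂p : K₂.IsPrime := hQ₂.comap _
    have h12' : K₁ < K₂ := hstrict h12
    have h2P' : K₂ < P₁.comap (Pi.evalRingHom D i) := by
      rw [← hPbig_symm]; exact hstrict h2P
    have hi₂ : Pi.single i (1 : D i) ∉ K₂ := by
      intro hmem
      have : (1 : D i) ∈ P₁ := by
        have := h2P'.le hmem
        simpa using this
      exact hP₁p.ne_top ((Ideal.eq_top_iff_one _).mpr this)
    have hi₁ : Pi.single i (1 : D i) ∉ K₁ := fun hmem => hi₂ (h12'.le hmem)
    obtain ⟨hk₁p, hk₁eq⟩ := aux_prime_structure hK₁p hi₁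
    obtain ⟨hk₂p, hk₂eq⟩ := aux_prime_structure hK₂p hi₂
    have hk12 : K₁.map (Pi.evalRingHom D i) < K₂.map (Pi.evalRingHom D i) := by
      refine lt_of_le_of_ne (Ideal.map_mono h12'.le) (fun h => h12'.ne ?_)
      rw [hk₁eq, hk₂eq, h]
    have hk2P : K₂.map (Pi.evalRingHom D i) < P₁ := by
      refine lt_of_le_of_ne ?_ (fun h => h2P'.ne ?_)
      · have : K₂.map (Pi.evalRingHom D i) ≤ (P₁.comap (Pi.evalRingHom D i)).map (Pi.evalRingHom D i) := Ideal.map_mono h2P'.le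
        rwa [Ideal.map_comap_of_surjective _ hsurj] at this
      · rw [hk₂eq, h]
    exact hP₁.2.2 _ _ hk₁p hk₂p hk12 hk2P
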